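/- Let n ≥ 1 and 1 ≤ j ≤ n be integers, let S ⊆ {1, …, n} with |S| = s ≥ 1, and let r be an integer with 1 ≤ r ≤ s; write λ = s/r. Then the average of min(|A ∩ S|, r) over all j-element subsets A of {1, …, n} is at least r · (1 − e^{−λ j / n}); that is, (1/C(n,j)) · Σ_{A ⊆ {1,…,n}, |A| = j} min(|A ∩ S|, r) ≥ r · (1 − e^{−s j /(r n)}). -/

import Mathlib

open Finset

/-- Double counting: inserting one element into a `j`-subset produces each
`(j+1)`-subset exactly `j+1` times. -/
lemma insert_double_count {α : Type*} [DecidableEq α] (u : Finset α) (j : ℕ) (f : Finset α → ℝ) :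
    ∑ B ∈ u.powersetCard j, ∑ v ∈ u \ B, f (insert v B)
      = ((j : ℝ) + 1) * ∑ A ∈ u.powersetCard (j + 1), f A := by
  have key : ∑ B ∈ u.powersetCard j, ∑ v ∈ u \ B, f (insert v B)
      = ∑ A ∈ u.powersetCard (j+1), ∑ _v ∈ A, f A := by
    rw [Finset.sum_sigma', Finset.sum_sigma']
    refine Finset.sum_bij' (fun p _ => ⟨insert p.2 p.1, p.2⟩)
      (fun p _ => ⟨p.1.erase p.2, p.2⟩) ?_ ?_ ?_ ?_ ?_
    · rintro ⟨B, v⟩ hp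
      simp only [Finset.mem_sigma, Finset.mem_powersetCard, Finset.mem_sdiff] at hp ⊢
      obtain ⟨⟨hBu, hBc⟩, hvu, hvB⟩ := hp
      refine ⟨⟨Finset.insert_subset hvu hBu, ?_⟩, Finset.mem_insert_self _ _⟩
      rw [Finset.card_insert_of_notMem hvB, hBc]
    · rintro ⟨A, v⟩ hp
      simp only [Finset.mem_sigma, Finset.mem_powersetCard, Finset.mem_sdiff] at hp ⊢
      obtain ⟨⟨hAu, hAc⟩, hvA⟩ := hp
      refine ⟨⟨(Finset.erase_subset _ _).trans hAu, ?_⟩, hAu hvA, Finset.notMem_erase _ _⟩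
      simp [Finset.card_erase_of_mem hvA, hAc]
    · rintro ⟨B, v⟩ hp
      simp only [Finset.mem_sigma, Finset.mem_powersetCard, Finset.mem_sdiff] at hp
      simp [Finset.erase_insert hp.2.2]
    · rintro ⟨A, v⟩ hp
      simp only [Finset.mem_sigma, Finset.mem_powersetCard, Finset.mem_sdiff] at hp
      simp [Finset.insert_erase hp.2]
    · rintro ⟨B, v⟩ hp
      rfl
  rw [key, Finset.mul_sum]
  refine Finset.sum_congr rfl fun A hA => ?_
  rw [Finset.sum_const, (Finset.mem_powersetCard.mp hA).2, nsmul_eq_mul]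
  push_cast
  ring

set_option maxHeartbeats 1000000 in
/-- For `S ⊆ {1,…,n}` with `|S| = s ≥ 1` and `1 ≤ r ≤ s`, the average of
`min(|A ∩ S|, r)` over all `j`-element subsets `A` of `{1,…,n}` is at least
`r · (1 − e^{−s·j/(r·n)})`. -/
theorem stmt6 (n j s r : ℕ) (hn : 1 ≤ n) (hj1 : 1 ≤ j) (hjn : j ≤ n)
    (S : Finset (Fin n)) (hS : S.card = s) (hs : 1 ≤ s) (hr1 : 1 ≤ r) (hrs : r ≤ s) :
    (r : ℝ) * (1 - Real.exp (-((s : ℝ) * (j : ℝ)) / ((r : ℝ) * (n : ℝ)))) ≤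
      (1 / (n.choose j : ℝ)) *
        ∑ A ∈ (Finset.univ : Finset (Fin n)).powersetCard j,
          (min (A ∩ S).card r : ℝ) := by
  have hsn : s ≤ n := by
    rw [← hS]
    simpa using Finset.card_le_card (Finset.subset_univ S)
  have hn0 : (0:ℝ) < n := by positivity
  have hr0 : (0:ℝ) < r := by positivity
  have hs0 : (0:ℝ) < s := by positivity
  have hrsR : (r:ℝ) ≤ s := by exact_mod_cast hrs
  have hsnR : (s:ℝ) ≤ n := by exact_mod_cast hsn
  set ρ : ℝ := 1 - (s:ℝ) / ((r:ℝ) * n) with hρ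
  have hρ0 : 0 ≤ ρ := by
    rw [hρ, sub_nonneg, div_le_one (by positivity)]
    calc (s:ℝ) ≤ (n:ℝ) := hsnR
    _ ≤ (r:ℝ) * n := le_mul_of_one_le_left hn0.le (by exact_mod_cast hr1)
  set f : Finset (Fin n) → ℝ := fun A => max ((r:ℝ) - (A ∩ S).card) 0 with hf
  -- main inductive bound
  have main : ∀ k, k ≤ n →
      ∑ A ∈ (Finset.univ : Finset (Fin n)).powersetCard k, f A ≤ (n.choose k : ℝ) * r * ρ ^ k := by
    intro k
    induction k with
    | zero =>
      intro _
      simp [hf, Finset.powersetCard_zero, le_of_lt hr0]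
    | succ m ih =>
      intro hm
      have hm' : m ≤ n := le_of_lt (Nat.lt_of_lt_of_le (Nat.lt_succ_self m) hm)
      have step : ∀ B ∈ (Finset.univ : Finset (Fin n)).powersetCard m,
          ∑ v ∈ (Finset.univ : Finset (Fin n)) \ B, f (insert v B)
            ≤ ((n:ℝ) - m) * ρ * f B := by
        intro B hB
        obtain ⟨hBu, hBc⟩ := Finset.mem_powersetCard.mp hB
        set y : ℕ := (B ∩ S).card with hy
        have hys : y ≤ s := by
          rw [← hS]; exact Finset.card_le_card (Finset.inter_subset_right)
        have hyB : y ≤ m := by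
          rw [← hBc]; exact Finset.card_le_card (Finset.inter_subset_left)
        clear_value y
        rw [← Finset.sum_filter_add_sum_filter_not ((Finset.univ : Finset (Fin n)) \ B) (· ∈ S)]
        have hval1 : ∀ v ∈ ((Finset.univ : Finset (Fin n)) \ B).filter (· ∈ S),
            f (insert v B) = max ((r:ℝ) - ((y:ℝ)+1)) 0 := by
          intro v hv
          simp only [Finset.mem_filter, Finset.mem_sdiff] at hv
          have h2 : insert v B ∩ S = insert v (B ∩ S) := by
            rw [Finset.insert_inter_of_mem hv.2]
          rw [hf]
          simp only [h2, Finset.card_insert_of_notMem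
            (fun h => hv.1.2 (Finset.mem_inter.mp h).1)]
          rw [← hy]
          push_cast
          ring_nf
        have hval2 : ∀ v ∈ ((Finset.univ : Finset (Fin n)) \ B).filter (¬ · ∈ S),
            f (insert v B) = f B := by
          intro v hv
          simp only [Finset.mem_filter, Finset.mem_sdiff] at hv
          have h2 : insert v B ∩ S = B ∩ S := by
            rw [Finset.insert_inter_of_notMem hv.2]
          rw [hf]; simp [h2]
        rw [Finset.sum_congr rfl hval1, Finset.sum_congr rfl hval2,
          Finset.sum_const, Finset.sum_const]
        have hc1 : ((Finset.univ : Finset (Fin n)) \ B).filter (· ∈ S) = S \ B := by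
          ext v; simp [Finset.mem_sdiff, and_comm]
        have hcard1 : (((Finset.univ : Finset (Fin n)) \ B).filter (· ∈ S)).card = s - y := by
          rw [hc1]
          have h1 := Finset.card_sdiff_add_card_inter S B
          rw [Finset.inter_comm S B, ← hy, hS] at h1
          exact Nat.eq_sub_of_add_eq h1
        have hcardall : ((Finset.univ : Finset (Fin n)) \ B).card = n - m := by
          rw [Finset.card_sdiff_of_subset (Finset.subset_univ B), hBc, Finset.card_univ,
            Fintype.card_fin]
        have hcard2 : (((Finset.univ : Finset (Fin n)) \ B).filter (¬ · ∈ S)).card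
            = (n - m) - (s - y) := by
          have h2 := Finset.card_filter_add_card_filter_not
            (s := (Finset.univ : Finset (Fin n)) \ B) (p := (· ∈ S))
          rw [hcard1, hcardall] at h2
          omega
        have hsyNM : s - y ≤ n - m := by
          have h3 : (S \ B).card ≤ ((Finset.univ : Finset (Fin n)) \ B).card :=
            Finset.card_le_card (Finset.sdiff_subset_sdiff (Finset.subset_univ S) le_rfl)
          have h4 := hcard1
          rw [hc1] at h4
          omega
        rw [hcard1, hcard2, nsmul_eq_mul, nsmul_eq_mul]
        have hcast1 : ((s - y : ℕ) : ℝ) = (s:ℝ) - y := by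
          push_cast [hys]; ring
        have hcast2 : (((n - m) - (s - y) : ℕ) : ℝ) = ((n:ℝ) - m) - ((s:ℝ) - y) := by
          have h3 : m ≤ n := hm'
          push_cast [Nat.cast_sub hsyNM, Nat.cast_sub hys, Nat.cast_sub h3]
          ring
        rw [hcast1, hcast2]
        rcases le_or_gt (r:ℕ) y with hry | hry
        · -- y ≥ r : everything is 0
          have hfB : f B = 0 := by
            rw [hf]
            simp only
            rw [max_eq_right]
            have : (r:ℝ) ≤ (y:ℝ) := by exact_mod_cast hry
            simp only [← hy]
            linarith
          have h4 : max ((r:ℝ) - ((y:ℝ)+1)) 0 = 0 := by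
            rw [max_eq_right]
            have : (r:ℝ) ≤ (y:ℝ) := by exact_mod_cast hry
            linarith
          rw [hfB, h4]
          simp
        · -- y < r
          have hyr : (y:ℝ) < r := by exact_mod_cast hry
          have hfB : f B = (r:ℝ) - y := by
            rw [hf]
            simp only [← hy]
            rw [max_eq_left]
            linarith
          have h4 : max ((r:ℝ) - ((y:ℝ)+1)) 0 = (r:ℝ) - y - 1 := by
            have : (y:ℝ) + 1 ≤ r := by
              have : y + 1 ≤ r := hry
              exact_mod_cast this
            rw [max_eq_left (by linarith)]
            ring
          rw [hfB, h4, hρ]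
          have hnm0 : (0:ℝ) ≤ (n:ℝ) - m := by
            have : (m:ℝ) ≤ n := by exact_mod_cast hm'
            linarith
          have key : ((n:ℝ) - m) * ((s:ℝ) / ((r:ℝ) * n)) * ((r:ℝ) - y) ≤ (s:ℝ) - y := by
            rw [show ((n:ℝ) - m) * ((s:ℝ) / ((r:ℝ) * n)) * ((r:ℝ) - y)
              = (((n:ℝ) - m) * s * ((r:ℝ) - y)) / ((r:ℝ) * n) by ring,
              div_le_iff₀ (by positivity)]
            have hy0 : (0:ℝ) ≤ y := by positivity
            nlinarith [mul_nonneg (mul_nonneg (by linarith : (0:ℝ) ≤ (m:ℝ)) hs0.le)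
              (by linarith : (0:ℝ) ≤ (r:ℝ) - y),
              mul_nonneg (mul_nonneg hn0.le hy0) (by linarith : (0:ℝ) ≤ (s:ℝ) - r)]
          have expand : ((n:ℝ) - m) * (1 - (s:ℝ)/((r:ℝ)*n)) * ((r:ℝ) - y)
              = ((n:ℝ) - m)*((r:ℝ) - y) - ((n:ℝ) - m)*((s:ℝ)/((r:ℝ)*n))*((r:ℝ) - y) := by
            ring
          have lhs_eq : ((s:ℝ) - y) * ((r:ℝ) - y - 1)
              + (((n:ℝ) - m) - ((s:ℝ) - y)) * ((r:ℝ) - y)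
              = ((n:ℝ) - m)*((r:ℝ) - y) - ((s:ℝ) - y) := by ring
          linarith [key, expand, lhs_eq]
      -- combine
      have hdc := insert_double_count (Finset.univ : Finset (Fin n)) m f
      have h5 : ((m:ℝ) + 1) * ∑ A ∈ (Finset.univ : Finset (Fin n)).powersetCard (m+1), f A
          ≤ ((n:ℝ) - m) * ρ * ((n.choose m : ℝ) * r * ρ ^ m) := by
        rw [← hdc]
        calc ∑ B ∈ (Finset.univ : Finset (Fin n)).powersetCard m,
              ∑ v ∈ (Finset.univ : Finset (Fin n)) \ B, f (insert v B)
            ≤ ∑ B ∈ (Finset.univ : Finset (Fin n)).powersetCard m, ((n:ℝ) - m) * ρ * f B :=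
              Finset.sum_le_sum step
          _ = ((n:ℝ) - m) * ρ * ∑ B ∈ (Finset.univ : Finset (Fin n)).powersetCard m, f B := by
              rw [Finset.mul_sum]
          _ ≤ ((n:ℝ) - m) * ρ * ((n.choose m : ℝ) * r * ρ ^ m) := by
              have hnm0 : (0:ℝ) ≤ (n:ℝ) - m := by
                have : (m:ℝ) ≤ n := by exact_mod_cast hm'
                linarith
              exact mul_le_mul_of_nonneg_left (ih hm') (mul_nonneg hnm0 hρ0)
        -- done
      have hchoose : ((n:ℝ) - m) * (n.choose m : ℝ) = ((m:ℝ) + 1) * (n.choose (m+1) : ℝ) := by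
        have := Nat.choose_succ_right_eq n m
        have h6 : (n.choose (m+1) * (m+1) : ℕ) = n.choose m * (n - m) := this
        have h7 : ((n.choose (m+1) * (m+1) : ℕ) : ℝ) = ((n.choose m * (n - m) : ℕ) : ℝ) := by
          exact_mod_cast h6
        push_cast [Nat.cast_sub hm'] at h7
        linarith
      have hm1 : (0:ℝ) < (m:ℝ) + 1 := by positivity
      rw [← mul_le_mul_iff_right₀ hm1]
      calc ((m:ℝ) + 1) * ∑ A ∈ (Finset.univ : Finset (Fin n)).powersetCard (m+1), f A
          ≤ ((n:ℝ) - m) * ρ * ((n.choose m : ℝ) * r * ρ ^ m) := h5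
        _ = ((n:ℝ) - m) * (n.choose m : ℝ) * (r * ρ ^ (m+1)) := by ring
        _ = ((m:ℝ) + 1) * (n.choose (m+1) : ℝ) * (r * ρ ^ (m+1)) := by rw [hchoose]
        _ = ((m:ℝ) + 1) * ((n.choose (m+1) : ℝ) * r * ρ ^ (m+1)) := by ring
  -- assemble
  have hmain := main j hjn
  have hminf : ∀ A : Finset (Fin n),
      (r:ℝ) - f A ≤ (min (A ∩ S).card r : ℝ) := by
    intro A
    rw [hf]
    simp only
    rcases le_total (((A ∩ S).card : ℝ)) ((r:ℝ)) with h | h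
    · rw [min_eq_left h, max_eq_left (by linarith)]
      linarith
    · rw [min_eq_right h, max_eq_right (by linarith)]
      linarith
  have hcardP : ((Finset.univ : Finset (Fin n)).powersetCard j).card = n.choose j := by
    rw [Finset.card_powersetCard, Finset.card_univ, Fintype.card_fin]
  have hsum : (n.choose j : ℝ) * r * (1 - ρ ^ j)
      ≤ ∑ A ∈ (Finset.univ : Finset (Fin n)).powersetCard j, (min (A ∩ S).card r : ℝ) := by
    have h8 : ∑ A ∈ (Finset.univ : Finset (Fin n)).powersetCard j, ((r:ℝ) - f A)
        ≤ ∑ A ∈ (Finset.univ : Finset (Fin n)).powersetCard j, (min (A ∩ S).card r : ℝ) :=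
      Finset.sum_le_sum fun A _ => hminf A
    rw [Finset.sum_sub_distrib, Finset.sum_const, hcardP, nsmul_eq_mul] at h8
    have : (n.choose j : ℝ) * r * (1 - ρ ^ j) ≤ (n.choose j : ℝ) * r -
        ∑ A ∈ (Finset.univ : Finset (Fin n)).powersetCard j, f A := by
      nlinarith [hmain]
    linarith
  have hexp : ρ ^ j ≤ Real.exp (-((s : ℝ) * (j : ℝ)) / ((r : ℝ) * (n : ℝ))) := by
    have h9 : ρ ≤ Real.exp (-((s:ℝ) / ((r:ℝ) * n))) := by
      have := Real.add_one_le_exp (-((s:ℝ) / ((r:ℝ) * n)))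
      rw [hρ]; linarith
    calc ρ ^ j ≤ (Real.exp (-((s:ℝ) / ((r:ℝ) * n)))) ^ j := pow_le_pow_left₀ hρ0 h9 j
      _ = Real.exp ((j:ℕ) * (-((s:ℝ) / ((r:ℝ) * n)))) := by rw [← Real.exp_nat_mul]
      _ = Real.exp (-((s : ℝ) * (j : ℝ)) / ((r : ℝ) * (n : ℝ))) := by
          congr 1
          field_simp
  have hC0 : (0:ℝ) < (n.choose j : ℝ) := by
    exact_mod_cast Nat.choose_pos hjn
  rw [one_div, inv_mul_eq_div, le_div_iff₀ hC0]
  calc (r:ℝ) * (1 - Real.exp (-((s : ℝ) * (j : ℝ)) / ((r : ℝ) * (n : ℝ)))) * (n.choose j : ℝ)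
      ≤ (r:ℝ) * (1 - ρ ^ j) * (n.choose j : ℝ) := by
        have h10 : 1 - Real.exp (-((s : ℝ) * (j : ℝ)) / ((r : ℝ) * (n : ℝ))) ≤ 1 - ρ ^ j := by
          linarith [hexp]
        exact mul_le_mul_of_nonneg_right (mul_le_mul_of_nonneg_left h10 hr0.le) hC0.le
    _ = (n.choose j : ℝ) * r * (1 - ρ ^ j) := by ring
    _ ≤ _ := hsum
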